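/- Let A = {a_1,…,a_n} be positive integers with Σ a_i = 2T, T ≥ 1. Define m_* = 1/4, m_• = 1, w_• = (2T + 5/4)^5, w_* = 4·w_•·(1 − 1/(T + 5/4))^2, O_min(C) = w_*(2 − m_*/(C+m_*)) + w_•·m_•/(C+m_*+m_•) + (2T−C)/(2T+m_*+m_•), and O_max(C) = w_*(2 − m_*/(C+m_*)) + w_•·m_•/(C+m_*+m_•) + Σ_{i=1}^{2T−C} 1/(C+m_*+m_•+i). Then for all integers K with 1 ≤ K ≤ T, O_min(T) > O_max(T+K) and O_min(T) > O_max(T−K). -/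

import Mathlib

open Finset

/-- The central quadratic-gain inequality: the weights are tuned so that the
counterweight function has a strict maximum at `c = t`, with gain at least
`2t + 5/4` whenever `(c-t)^2 ≥ 1` and `0 ≤ c ≤ 2t`. -/
lemma key_ineq (t c : ℝ) (ht : 1 ≤ t) (hc0 : 0 ≤ c) (hc2 : c ≤ 2 * t)
    (hK : 1 ≤ (c - t) ^ 2) :
    2 * t + 5 / 4 ≤
      (4 * (2 * t + 5 / 4) ^ 5 * (1 - 1 / (t + 5 / 4)) ^ 2 * (2 - (1/4) / (t + 1/4))
          + (2 * t + 5 / 4) ^ 5 * 1 / (t + 1/4 + 1))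
      - (4 * (2 * t + 5 / 4) ^ 5 * (1 - 1 / (t + 5 / 4)) ^ 2 * (2 - (1/4) / (c + 1/4))
          + (2 * t + 5 / 4) ^ 5 * 1 / (c + 1/4 + 1)) := by
  have h1 : (0:ℝ) < t + 1/4 := by linarith
  have h2 : (0:ℝ) < t + 5/4 := by linarith
  have h3 : (0:ℝ) < c + 1/4 := by linarith
  have h4 : (0:ℝ) < c + 5/4 := by linarith
  have hden : (0:ℝ) < (t + 5/4) ^ 2 * ((c + 5/4) * (c + 1/4)) := by positivity
  have hid :
      (4 * (2 * t + 5 / 4) ^ 5 * (1 - 1 / (t + 5 / 4)) ^ 2 * (2 - (1/4) / (t + 1/4))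
          + (2 * t + 5 / 4) ^ 5 * 1 / (t + 1/4 + 1))
      - (4 * (2 * t + 5 / 4) ^ 5 * (1 - 1 / (t + 5 / 4)) ^ 2 * (2 - (1/4) / (c + 1/4))
          + (2 * t + 5 / 4) ^ 5 * 1 / (c + 1/4 + 1))
      = (2 * t + 5 / 4) ^ 5 * (c - t) ^ 2
          / ((t + 5/4) ^ 2 * ((c + 5/4) * (c + 1/4))) := by
    have h1' : t + 1/4 ≠ 0 := ne_of_gt h1
    have h2' : t + 5/4 ≠ 0 := ne_of_gt h2
    have h3' : c + 1/4 ≠ 0 := ne_of_gt h3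
    have h4' : c + 5/4 ≠ 0 := ne_of_gt h4
    field_simp
    ring
  rw [hid, le_div_iff₀ hden]
  have hd : (t + 5/4) ^ 2 * ((c + 5/4) * (c + 1/4))
      ≤ (2 * t + 5/4) ^ 2 * ((2 * t + 5/4) * (2 * t + 5/4)) := by
    gcongr <;> linarith
  calc (2 * t + 5 / 4) * ((t + 5/4) ^ 2 * ((c + 5/4) * (c + 1/4)))
      ≤ (2 * t + 5 / 4) * ((2 * t + 5/4) ^ 2 * ((2 * t + 5/4) * (2 * t + 5/4))) := by
        apply mul_le_mul_of_nonneg_left hd (by linarith)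
    _ = (2 * t + 5 / 4) ^ 5 * 1 := by ring
    _ ≤ (2 * t + 5 / 4) ^ 5 * (c - t) ^ 2 := by
        apply mul_le_mul_of_nonneg_left hK (by positivity)

/-- Separation lemma for the NP-hardness reduction: the minimum overhang with
perfect-partition counterweight `T` exceeds the maximum overhang with
counterweight `T ± K`. -/
theorem omin_gt_omax (T : ℕ) (hT : 1 ≤ T)
    (k : ℕ) (a : Fin k → ℕ) (ha : ∀ i, 0 < a i) (hsum : ∑ i, a i = 2 * T) :
    let ms : ℝ := 1 / 4
    let mb : ℝ := 1
    let wb : ℝ := (2 * (T : ℝ) + 5 / 4) ^ 5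
    let ws : ℝ := 4 * wb * (1 - 1 / ((T : ℝ) + 5 / 4)) ^ 2
    let Omin : ℕ → ℝ := fun C =>
      ws * (2 - ms / ((C : ℝ) + ms)) + wb * mb / ((C : ℝ) + ms + mb)
        + (2 * (T : ℝ) - (C : ℝ)) / (2 * (T : ℝ) + ms + mb)
    let Omax : ℕ → ℝ := fun C =>
      ws * (2 - ms / ((C : ℝ) + ms)) + wb * mb / ((C : ℝ) + ms + mb)
        + ∑ i ∈ Finset.Icc 1 (2 * T - C), 1 / ((C : ℝ) + ms + mb + (i : ℝ))
    ∀ K : ℕ, 1 ≤ K → K ≤ T → Omin T > Omax (T + K) ∧ Omin T > Omax (T - K) := by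
  intro ms mb wb ws Omin Omax K hK1 hKT
  have ht : (1:ℝ) ≤ (T:ℝ) := by exact_mod_cast hT
  have main : ∀ C : ℕ, C ≤ 2 * T → 1 ≤ ((C:ℝ) - (T:ℝ)) ^ 2 → Omin T > Omax C := by
    intro C hC2 hCK
    have hC2' : (C:ℝ) ≤ 2 * (T:ℝ) := by exact_mod_cast hC2
    have key := key_ineq (T:ℝ) (C:ℝ) ht (by positivity) hC2' hCK
    -- bound the tail sum
    have hS : ∑ i ∈ Finset.Icc 1 (2 * T - C), 1 / ((C : ℝ) + ms + mb + (i : ℝ))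
        ≤ ((2 * T - C : ℕ) : ℝ) := by
      calc ∑ i ∈ Finset.Icc 1 (2 * T - C), 1 / ((C : ℝ) + ms + mb + (i : ℝ))
          ≤ ∑ _i ∈ Finset.Icc 1 (2 * T - C), (1:ℝ) := by
            apply Finset.sum_le_sum
            intro i hi
            have hi1 : 1 ≤ i := (Finset.mem_Icc.mp hi).1
            have hi1' : (1:ℝ) ≤ (i:ℝ) := by exact_mod_cast hi1
            have hc : (0:ℝ) ≤ (C:ℝ) := by positivity
            rw [div_le_one (by simp only [ms, mb]; linarith)]
            simp only [ms, mb]; linarith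
        _ = ((2 * T - C : ℕ) : ℝ) := by
            simp [Nat.card_Icc]
    have hS2 : ((2 * T - C : ℕ) : ℝ) ≤ 2 * (T:ℝ) := by
      have := Nat.sub_le (2 * T) C
      calc ((2 * T - C : ℕ) : ℝ) ≤ ((2 * T : ℕ) : ℝ) := by exact_mod_cast this
        _ = 2 * (T:ℝ) := by push_cast; ring
    have hpos : (0:ℝ) ≤ (2 * (T : ℝ) - (T : ℝ)) / (2 * (T : ℝ) + ms + mb) := by
      simp only [ms, mb]
      apply div_nonneg <;> linarith
    simp only [Omin, Omax, ws, wb, ms, mb] at *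
    linarith
  refine ⟨main (T + K) (by omega) ?_, main (T - K) (by omega) ?_⟩
  · have : ((T + K : ℕ) : ℝ) - (T:ℝ) = (K:ℝ) := by push_cast; ring
    rw [this]
    have : (1:ℝ) ≤ (K:ℝ) := by exact_mod_cast hK1
    nlinarith
  · have : ((T - K : ℕ) : ℝ) - (T:ℝ) = -(K:ℝ) := by
      rw [Nat.cast_sub hKT]; ring
    rw [this]
    have : (1:ℝ) ≤ (K:ℝ) := by exact_mod_cast hK1
    nlinarith
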